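/- The function z ↦ j(−z²; q¹²) · ( m(−q⁸, −z²; q¹²) − m(−q⁴, −z²; q¹²) ), defined for complex z in a punctured neighborhood of i with z² ∉ q^ℤ ∪ (−q^ℤ) (so that all the theta and Appell functions appearing are defined), tends to 0 as z → i; likewise the function z ↦ j(−z²; q¹²) · ( m(−q¹⁰, −z²; q¹²) − m(−q², −z²; q¹²) ) tends to 0 as z → i. -/

import Mathlib

open scoped BigOperators

noncomputable section

/-- Infinite q-Pochhammer symbol `(x;Q)_∞ = ∏_{i≥0} (1 - Q^i x)`. -/
def qPochInf (x Q : ℂ) : ℂ := ∏' i : ℕ, (1 - Q ^ i * x)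

/-- Finite q-Pochhammer symbol `(x;Q)_n = ∏_{i=0}^{n-1} (1 - Q^i x)`. -/
def qPochFin (x Q : ℂ) (n : ℕ) : ℂ := ∏ i ∈ Finset.range n, (1 - Q ^ i * x)

/-- Theta function `j(x;Q) = (x;Q)_∞ (Q/x;Q)_∞ (Q;Q)_∞`. -/
def jtheta (x Q : ℂ) : ℂ := qPochInf x Q * qPochInf (Q / x) Q * qPochInf Q Q

/-- `J_a = (q^a;q^a)_∞`. -/
def Jq (a : ℕ) (q : ℂ) : ℂ := qPochInf (q ^ a) (q ^ a)

/-- `J_{a,b} = j(q^a;q^b)`. -/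
def Jab (a b : ℕ) (q : ℂ) : ℂ := jtheta (q ^ a) (q ^ b)

/-- `J̄_{a,b} = j(-q^a;q^b)`. -/
def Jbarab (a b : ℕ) (q : ℂ) : ℂ := jtheta (-q ^ a) (q ^ b)

/-- Single term of the Hecke-type double sum. -/
def heckeTerm (a b c : ℤ) (x y Q : ℂ) (r s : ℤ) : ℂ :=
  (-1) ^ (r + s) * x ^ r * y ^ s *
    Q ^ (a * (r * (r - 1) / 2) + b * r * s + c * (s * (s - 1) / 2))

/-- Hecke-type double sum `f_{a,b,c}(x,y;q)`. -/
def heckeF (a b c : ℤ) (x y Q : ℂ) : ℂ :=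
  (∑' rs : ℕ × ℕ, heckeTerm a b c x y Q rs.1 rs.2) -
    ∑' rs : ℕ × ℕ, heckeTerm a b c x y Q (-(rs.1 : ℤ) - 1) (-(rs.2 : ℤ) - 1)

/-- Normalized admissible string function `𝒞^{(p,p′)}_{m,ℓ}(q)`, defined so that
`(q;q)_∞³ 𝒞 = f_{1,p′,2pp′}(q^{1+(m+ℓ)/2}, -q^{p(p′+ℓ+1)};q) - f_{1,p′,2pp′}(q^{(m-ℓ)/2}, -q^{p(p′-ℓ-1)};q)`. -/
def strC (p p' m ℓ : ℤ) (q : ℂ) : ℂ :=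
  (heckeF 1 p' (2 * p * p') (q ^ (1 + (m + ℓ) / 2)) (-q ^ (p * (p' + ℓ + 1))) q -
      heckeF 1 p' (2 * p * p') (q ^ ((m - ℓ) / 2)) (-q ^ (p * (p' - ℓ - 1))) q) /
    qPochInf q q ^ 3

/-- Admissible string function with its fractional power prefactor,
`C^{(p,p′)}_{m,ℓ}(q) = q^{-1/8 + p(ℓ+1)²/(4p′) - p m²/(4(p′-2p))} 𝒞^{(p,p′)}_{m,ℓ}(q)`. -/
def strCpre (p p' m ℓ : ℤ) (q : ℝ) : ℂ :=
  ((q ^ ((-1 / 8 : ℝ) + (p : ℝ) * ((ℓ : ℝ) + 1) ^ 2 / (4 * (p' : ℝ)) -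
      (p : ℝ) * (m : ℝ) ^ 2 / (4 * ((p' : ℝ) - 2 * (p : ℝ)))) : ℝ) : ℂ) *
    strC p p' m ℓ (q : ℂ)

/-- Appell function `m(x,z;Q)`. -/
def appell (x z Q : ℂ) : ℂ :=
  (1 / jtheta z Q) *
    ∑' r : ℤ, ((-1) ^ r * Q ^ (r * (r - 1) / 2) * z ^ r) / (1 - Q ^ (r - 1) * x * z)

/-- Theta function `Θ_{n,m}(z;q) = ∑_{t ∈ ℤ + n/(2m)} q^{m t²} z^{-m t}`. -/
def bigTheta (n m : ℤ) (z : ℂ) (q : ℝ) : ℂ :=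
  ∑' k : ℤ, ((q ^ ((m : ℝ) * ((k : ℝ) + (n : ℝ) / (2 * (m : ℝ))) ^ 2) : ℝ) : ℂ) *
    z ^ (-((m : ℂ) * ((k : ℂ) + (n : ℂ) / (2 * (m : ℂ)))))

/-- Admissible character `χ_ℓ^{(p,p′)}(z;q)`. -/
def adChar (p p' ℓ : ℤ) (z : ℂ) (q : ℝ) : ℂ :=
  (bigTheta (ℓ + 1) p' z (q ^ p) - bigTheta (-(ℓ + 1)) p' z (q ^ p)) /
    (bigTheta 1 2 z q - bigTheta (-1) 2 z q)

/-- Ramanujan's third-order mock theta function `f₃`. -/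
def mockf3 (x : ℂ) : ℂ := ∑' n : ℕ, x ^ (n ^ 2) / qPochFin (-x) x n ^ 2

/-- Ramanujan's third-order mock theta function `ω₃`. -/
def mockomega3 (x : ℂ) : ℂ := ∑' n : ℕ, x ^ (2 * n * (n + 1)) / qPochFin x (x ^ 2) (n + 1) ^ 2

/-- Ramanujan's tenth-order mock theta function `φ₁₀`. -/
def mockphi10 (x : ℂ) : ℂ := ∑' n : ℕ, x ^ (n * (n + 1) / 2) / qPochFin x (x ^ 2) (n + 1)

/-- Ramanujan's tenth-order mock theta function `ψ₁₀`. -/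
def mockpsi10 (x : ℂ) : ℂ := ∑' n : ℕ, x ^ ((n + 1) * (n + 2) / 2) / qPochFin x (x ^ 2) (n + 1)

/-- Ramanujan's tenth-order mock theta function `X₁₀`. -/
def mockX10 (x : ℂ) : ℂ := ∑' n : ℕ, (-1) ^ n * x ^ (n ^ 2) / qPochFin (-x) x (2 * n)

/-- Ramanujan's tenth-order mock theta function `χ₁₀`. -/
def mockchi10 (x : ℂ) : ℂ := ∑' n : ℕ, (-1) ^ n * x ^ ((n + 1) ^ 2) / qPochFin (-x) x (2 * n + 1)

/-- Ramanujan's second-order mock theta function `A₂`. -/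
def mockA2 (x : ℂ) : ℂ :=
  ∑' n : ℕ, x ^ (n + 1) * qPochFin (-x ^ 2) (x ^ 2) n / qPochFin x (x ^ 2) (n + 1)

/-- Ramanujan's second-order mock theta function `μ₂`. -/
def mockmu2 (x : ℂ) : ℂ :=
  ∑' n : ℕ, (-1) ^ n * x ^ (n ^ 2) * qPochFin x (x ^ 2) n / qPochFin (-x ^ 2) (x ^ 2) n ^ 2

namespace AppellLimitAux

lemma summable_log {Q y : ℂ} (hQ : ‖Q‖ < 1) :
    Summable (fun i : ℕ => Complex.log (1 - Q ^ i * y)) := by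
  have hgeo : Summable (fun i : ℕ => (3/2 : ℝ) * (‖Q‖ ^ i * ‖y‖)) :=
    (((summable_geometric_of_lt_one (norm_nonneg Q) hQ).mul_right ‖y‖).mul_left _)
  refine Summable.of_norm_bounded_eventually hgeo ?_
  rw [Nat.cofinite_eq_atTop]
  have h0 : Filter.Tendsto (fun i : ℕ => ‖Q‖ ^ i * ‖y‖) Filter.atTop (nhds 0) := by
    simpa using (tendsto_pow_atTop_nhds_zero_of_lt_one (norm_nonneg Q) hQ).mul_const ‖y‖
  filter_upwards [h0.eventually_le_const (by norm_num : (0:ℝ) < 1/2)] with i hi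
  have h1 : ‖-(Q ^ i * y)‖ ≤ 1/2 := by
    rw [norm_neg, norm_mul, norm_pow]; exact hi
  calc ‖Complex.log (1 - Q ^ i * y)‖ = ‖Complex.log (1 + -(Q ^ i * y))‖ := by ring_nf
    _ ≤ 3/2 * ‖-(Q ^ i * y)‖ := Complex.norm_log_one_add_half_le_self h1
    _ ≤ 3/2 * (‖Q‖ ^ i * ‖y‖) := by rw [norm_neg, norm_mul, norm_pow]

lemma qPochInf_ne_zero {Q y : ℂ} (hQ : ‖Q‖ < 1) (h : ∀ i : ℕ, 1 - Q ^ i * y ≠ 0) :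
    qPochInf y Q ≠ 0 := by
  have h2 : Complex.exp (∑' i : ℕ, Complex.log (1 - Q ^ i * y)) = ∏' i : ℕ, (1 - Q ^ i * y) :=
    Complex.cexp_tsum_eq_tprod (fun i => h i) (summable_log hQ)
  rw [qPochInf, ← h2]
  exact Complex.exp_ne_zero _

/-- Majorant for the Appell sum terms. -/
def Mj (q : ℝ) (r : ℤ) : ℝ := (q ^ 12) ^ (r * (r - 1) / 2) * 2 ^ r.natAbs

lemma summable_ratio_aux {t : ℝ} (ht0 : 0 < t) (ht1 : t < 1) (g : ℕ → ℤ)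
    (hg : ∀ n, g n + n ≤ g (n + 1)) :
    Summable (fun n : ℕ => t ^ (g n) * 2 ^ n) := by
  refine summable_of_ratio_norm_eventually_le (r := 1/2) (by norm_num) ?_
  have h0 : Filter.Tendsto (fun n : ℕ => t ^ n) Filter.atTop (nhds 0) :=
    tendsto_pow_atTop_nhds_zero_of_lt_one ht0.le ht1
  filter_upwards [h0.eventually_le_const (by norm_num : (0:ℝ) < 1/4)] with n hn
  have hb : t ^ (g (n+1)) ≤ t ^ (g n + n) :=
    zpow_le_zpow_right_of_le_one₀ ht0 ht1.le (hg n)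
  have hb2 : t ^ (g n + (n:ℤ)) = t ^ (g n) * t ^ (n:ℤ) := zpow_add₀ ht0.ne' _ _
  rw [Real.norm_eq_abs, Real.norm_eq_abs, abs_of_pos (by positivity),
    abs_of_pos (by positivity)]
  calc t ^ (g (n+1)) * 2 ^ (n+1) ≤ t ^ (g n + (n:ℤ)) * 2 ^ (n+1) := by
        apply mul_le_mul_of_nonneg_right hb (by positivity)
    _ = (t ^ n * 2) * (t ^ (g n) * 2 ^ n) := by
        rw [hb2, zpow_natCast]; ring
    _ ≤ (1/4 * 2) * (t ^ (g n) * 2 ^ n) := by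
        apply mul_le_mul_of_nonneg_right _ (by positivity)
        apply mul_le_mul_of_nonneg_right hn (by norm_num)
    _ = 1/2 * (t ^ (g n) * 2 ^ n) := by ring

lemma mj_summable {q : ℝ} (hq0 : 0 < q) (hq1 : q < 1) : Summable (Mj q) := by
  have ht0 : (0:ℝ) < q ^ 12 := by positivity
  have ht1 : q ^ 12 < 1 := pow_lt_one₀ hq0.le hq1 (by norm_num)
  apply Summable.of_nat_of_neg
  · have := summable_ratio_aux ht0 ht1 (fun n => (n : ℤ) * ((n : ℤ) - 1) / 2) ?_
    · apply this.congr; intro n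
      simp [Mj]
    · intro n
      have h : ((n:ℤ) + 1) * (((n:ℤ) + 1) - 1) = (n:ℤ) * ((n:ℤ) - 1) + (n:ℤ) * 2 := by ring
      push_cast
      rw [h, Int.add_mul_ediv_right _ _ (by norm_num : (2:ℤ) ≠ 0)]
  · have := summable_ratio_aux ht0 ht1 (fun n => (-(n:ℤ)) * ((-(n:ℤ)) - 1) / 2) ?_
    · apply this.congr; intro n
      simp [Mj]
    · intro n
      have h : (-((n:ℤ)+1)) * ((-((n:ℤ)+1)) - 1) = (-(n:ℤ)) * ((-(n:ℤ)) - 1) + ((n:ℤ)+1) * 2 := by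
        ring
      push_cast
      rw [h, Int.add_mul_ediv_right _ _ (by norm_num : (2:ℤ) ≠ 0)]
      linarith

/-- Appell sum term. -/
def fterm (q : ℝ) (x : ℂ) (r : ℤ) (u : ℂ) : ℂ :=
  ((-1) ^ r * ((q:ℂ) ^ 12) ^ (r * (r - 1) / 2) * u ^ r) /
    (1 - ((q:ℂ) ^ 12) ^ (r - 1) * x * u)

lemma denom_eq {q : ℝ} (hq0 : 0 < q) (k : ℕ) (r : ℤ) (u : ℂ) :
    1 - ((q:ℂ) ^ 12) ^ (r - 1) * (-(q:ℂ) ^ k) * u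
      = 1 + ((q ^ (12 * (r - 1)) * q ^ k : ℝ) : ℂ) * u := by
  have hq : (q:ℂ) ≠ 0 := Complex.ofReal_ne_zero.mpr hq0.ne'
  rw [Complex.ofReal_mul, Complex.ofReal_zpow, Complex.ofReal_pow]
  rw [← zpow_natCast (q:ℂ) 12, ← zpow_mul]
  ring

lemma denom_norm {q : ℝ} (hq0 : 0 < q) (k : ℕ) (r : ℤ) {u : ℂ} (hre : 0 ≤ u.re) :
    1 ≤ ‖1 - ((q:ℂ) ^ 12) ^ (r - 1) * (-(q:ℂ) ^ k) * u‖ := by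
  rw [denom_eq hq0]
  set c : ℝ := q ^ (12 * (r - 1)) * q ^ k with hc
  have hcpos : 0 < c := by positivity
  have hre2 : (1 + (c:ℂ) * u).re = 1 + c * u.re := by simp
  calc (1:ℝ) ≤ 1 + c * u.re := by nlinarith
    _ = (1 + (c:ℂ) * u).re := hre2.symm
    _ ≤ ‖1 + (c:ℂ) * u‖ := Complex.re_le_norm _

lemma ball_facts {u : ℂ} (hu : u ∈ Metric.ball (1:ℂ) 2⁻¹) :
    0 ≤ u.re ∧ 2⁻¹ ≤ ‖u‖ ∧ ‖u‖ ≤ 2 := by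
  rw [Metric.mem_ball, dist_eq_norm] at hu
  have habs := abs_norm_sub_norm_le u 1
  obtain ⟨h1', h2'⟩ := abs_le.mp habs
  have h1 : ‖(1:ℂ)‖ - ‖u - 1‖ ≤ ‖u‖ := by linarith
  have h2 : ‖u‖ ≤ ‖(1:ℂ)‖ + ‖u - 1‖ := by linarith
  have hre : |u.re - 1| ≤ ‖u - 1‖ := by
    have := Complex.abs_re_le_norm (u - 1)
    simpa using this
  rw [norm_one] at h1 h2
  refine ⟨by cases abs_le.mp hre; linarith, by linarith, by linarith⟩

lemma zpow_norm_le {a : ℝ} (ha : 2⁻¹ ≤ a) (ha2 : a ≤ 2) (r : ℤ) :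
    a ^ r ≤ 2 ^ r.natAbs := by
  have ha0 : 0 < a := lt_of_lt_of_le (by norm_num) ha
  rcases le_or_gt 0 r with hr | hr
  · lift r to ℕ using hr
    rw [zpow_natCast, Int.natAbs_natCast]
    exact pow_le_pow_left₀ ha0.le ha2 r
  · obtain ⟨n, rfl⟩ : ∃ n : ℕ, r = -(n:ℤ) := ⟨r.natAbs, by omega⟩
    rw [zpow_neg, zpow_natCast]
    rw [Int.natAbs_neg, Int.natAbs_natCast]
    have h2 : (2⁻¹:ℝ) ^ n ≤ a ^ n := pow_le_pow_left₀ (by norm_num) ha n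
    calc (a ^ n)⁻¹ ≤ ((2⁻¹:ℝ) ^ n)⁻¹ := by
          apply inv_anti₀ (by positivity) h2
      _ = 2 ^ n := by rw [← inv_pow, inv_inv]

lemma fterm_bound {q : ℝ} (hq0 : 0 < q) (hq1 : q < 1) (k : ℕ) (r : ℤ) {u : ℂ}
    (hu : u ∈ Metric.ball (1:ℂ) 2⁻¹) : ‖fterm q (-(q:ℂ) ^ k) r u‖ ≤ Mj q r := by
  obtain ⟨hre, hlo, hhi⟩ := ball_facts hu
  have hd := denom_norm hq0 k r hre
  rw [fterm, norm_div]
  have hnum : ‖(-1:ℂ) ^ r * ((q:ℂ) ^ 12) ^ (r * (r - 1) / 2) * u ^ r‖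
      ≤ (q ^ 12) ^ (r * (r - 1) / 2) * 2 ^ r.natAbs := by
    rw [norm_mul, norm_mul, norm_zpow, norm_zpow, norm_zpow, norm_neg, norm_one,
      one_zpow, one_mul]
    have h1 : ‖(q:ℂ) ^ 12‖ = q ^ 12 := by
      rw [norm_pow, Complex.norm_real, Real.norm_eq_abs, abs_of_pos hq0]
    rw [h1]
    exact mul_le_mul (le_refl _) (zpow_norm_le hlo hhi r) (by positivity) (by positivity)
  calc ‖(-1:ℂ) ^ r * ((q:ℂ) ^ 12) ^ (r * (r - 1) / 2) * u ^ r‖ /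
        ‖1 - ((q:ℂ) ^ 12) ^ (r - 1) * (-(q:ℂ) ^ k) * u‖
      ≤ ‖(-1:ℂ) ^ r * ((q:ℂ) ^ 12) ^ (r * (r - 1) / 2) * u ^ r‖ / 1 := by
        apply div_le_div_of_nonneg_left (norm_nonneg _) (by norm_num) hd
    _ = _ := div_one _
    _ ≤ Mj q r := hnum

lemma fterm_continuousOn {q : ℝ} (hq0 : 0 < q) (k : ℕ) (r : ℤ) :
    ContinuousOn (fterm q (-(q:ℂ) ^ k) r) (Metric.ball (1:ℂ) 2⁻¹) := by
  apply ContinuousOn.div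
  · apply ContinuousOn.mul continuousOn_const
    intro u hu
    have hu0 : u ≠ 0 := by
      intro h
      obtain ⟨_, hlo, _⟩ := ball_facts hu
      rw [h, norm_zero] at hlo; norm_num at hlo
    exact ((continuousAt_zpow₀ u r (Or.inl hu0)).continuousWithinAt)
  · exact (continuousOn_const.sub (continuousOn_const.mul continuousOn_id))
  · intro u hu
    obtain ⟨hre, _, _⟩ := ball_facts hu
    have := denom_norm hq0 k r hre
    intro h
    rw [h, norm_zero] at this; norm_num at this

lemma neg_one_zpow_sub (r : ℤ) : (-1:ℂ) ^ (1 - r) = -(-1:ℂ) ^ r := by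
  have h2 : ((-1:ℂ) ^ r) * ((-1:ℂ) ^ r) = 1 := by
    rw [← mul_zpow]; norm_num
  rw [sub_eq_add_neg, zpow_add₀ (by norm_num : (-1:ℂ) ≠ 0), zpow_one, zpow_neg,
    inv_eq_of_mul_eq_one_right h2]
  ring

lemma fterm_pair {q : ℝ} (hq0 : 0 < q) {k k' : ℕ} (hkk : (k:ℤ) + (k':ℤ) = 12) (r : ℤ) :
    fterm q (-(q:ℂ) ^ k') r 1 =
      fterm q (-(q:ℂ) ^ k) (1 - r) 1 + (-1) ^ r * ((q:ℂ) ^ 12) ^ (r * (r - 1) / 2) := by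
  have hq : q ≠ 0 := hq0.ne'
  rw [fterm, fterm, denom_eq hq0 k' r 1, denom_eq hq0 k (1 - r) 1]
  set c : ℝ := q ^ (12 * (r - 1)) * q ^ k' with hcdef
  set c' : ℝ := q ^ (12 * ((1 - r) - 1)) * q ^ k with hcdef'
  have hcpos : 0 < c := by positivity
  have hcpos' : 0 < c' := by positivity
  have hmul : c * c' = 1 := by
    rw [hcdef, hcdef', ← zpow_natCast q k, ← zpow_natCast q k']
    rw [← zpow_add₀ hq, ← zpow_add₀ hq, ← zpow_add₀ hq]
    have he : 12 * (r - 1) + (k' : ℤ) + (12 * ((1 - r) - 1) + (k : ℤ)) = 0 := by omega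
    rw [he, zpow_zero]
  have hcc : c' = c⁻¹ := eq_inv_of_mul_eq_one_right hmul
  have hE : (1 - r) * (1 - r - 1) / 2 = r * (r - 1) / 2 := by
    have h : (1 - r) * (1 - r - 1) = r * (r - 1) := by ring
    rw [h]
  rw [hE, neg_one_zpow_sub, hcc]
  rw [show ((1:ℂ) ^ r) = 1 from one_zpow r, show ((1:ℂ) ^ (1 - r)) = 1 from one_zpow _]
  simp only [mul_one]
  set A : ℂ := (-1:ℂ) ^ r * ((q:ℂ) ^ 12) ^ (r * (r - 1) / 2) with hA
  have h1 : (1:ℂ) + (c:ℝ) ≠ 0 := by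
    rw [show ((1:ℂ) + (c:ℝ)) = ((1 + c : ℝ) : ℂ) by push_cast; ring]
    exact Complex.ofReal_ne_zero.mpr (by positivity)
  have h2 : ((c:ℝ):ℂ) ≠ 0 := Complex.ofReal_ne_zero.mpr hcpos.ne'
  have h3 : (1:ℂ) + ((c⁻¹:ℝ):ℂ) ≠ 0 := by
    rw [show ((1:ℂ) + ((c⁻¹:ℝ):ℂ)) = ((1 + c⁻¹ : ℝ) : ℂ) by push_cast; ring]
    exact Complex.ofReal_ne_zero.mpr (by positivity)
  rw [Complex.ofReal_inv] at h3 ⊢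
  have h5 : (1:ℂ)/(1 + ((c:ℝ):ℂ)⁻¹) = ((c:ℝ):ℂ)/(1 + ((c:ℝ):ℂ)) := by
    rw [div_eq_div_iff h3 h1]
    field_simp
    ring
  have key : (1:ℂ)/(1 + ((c:ℝ):ℂ)) + 1/(1 + ((c:ℝ):ℂ)⁻¹) = 1 := by
    rw [h5, ← add_div, div_eq_one_iff_eq h1]
  linear_combination A * key

def eNeg : ℤ ≃ ℤ := Function.Involutive.toPerm (fun r : ℤ => 1 - r) (fun r => by ring)

lemma fterm_summable_one {q : ℝ} (hq0 : 0 < q) (hq1 : q < 1) (k : ℕ) :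
    Summable (fun r : ℤ => fterm q (-(q:ℂ) ^ k) r 1) := by
  apply Summable.of_norm_bounded (mj_summable hq0 hq1)
  intro r
  exact fterm_bound hq0 hq1 k r (Metric.mem_ball_self (by norm_num))

lemma cterm_tsum_zero {q : ℝ} (hq0 : 0 < q) :
    ∑' r : ℤ, ((-1:ℂ)) ^ r * ((q:ℂ) ^ 12) ^ (r * (r - 1) / 2) = 0 := by
  set C : ℤ → ℂ := fun r => ((-1:ℂ)) ^ r * ((q:ℂ) ^ 12) ^ (r * (r - 1) / 2) with hC
  have h := eNeg.tsum_eq C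
  have hneg : ∀ r : ℤ, C (eNeg r) = -C r := by
    intro r
    show C (1 - r) = -C r
    rw [hC]
    simp only
    have hE : (1 - r) * (1 - r - 1) / 2 = r * (r - 1) / 2 := by
      have h : (1 - r) * (1 - r - 1) = r * (r - 1) := by ring
      rw [h]
    rw [hE, neg_one_zpow_sub]
    ring
  rw [tsum_congr hneg, tsum_neg] at h
  have h2 : (2:ℂ) * ∑' r : ℤ, C r = 0 := by linear_combination -h
  rcases mul_eq_zero.mp h2 with h3 | h3
  · norm_num at h3
  · exact h3

lemma cterm_summable {q : ℝ} (hq0 : 0 < q) (hq1 : q < 1) :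
    Summable (fun r : ℤ => ((-1:ℂ)) ^ r * ((q:ℂ) ^ 12) ^ (r * (r - 1) / 2)) := by
  apply Summable.of_norm_bounded (mj_summable hq0 hq1)
  intro r
  rw [norm_mul, norm_zpow, norm_zpow, norm_neg, norm_one, one_zpow, one_mul]
  have h1 : ‖(q:ℂ) ^ 12‖ = q ^ 12 := by
    rw [norm_pow, Complex.norm_real, Real.norm_eq_abs, abs_of_pos hq0]
  rw [h1, Mj]
  have h2 : (1:ℝ) ≤ 2 ^ r.natAbs := one_le_pow₀ (by norm_num)
  exact le_mul_of_one_le_right (zpow_pos (by positivity) _).le h2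

set_option maxHeartbeats 1000000 in
lemma fterm_tsum_eq {q : ℝ} (hq0 : 0 < q) (hq1 : q < 1) {k k' : ℕ}
    (hkk : (k:ℤ) + (k':ℤ) = 12) :
    ∑' r : ℤ, fterm q (-(q:ℂ) ^ k') r 1 = ∑' r : ℤ, fterm q (-(q:ℂ) ^ k) r 1 := by
  have hsumk := fterm_summable_one hq0 hq1 k
  have hsume : Summable (fun r : ℤ => fterm q (-(q:ℂ) ^ k) (eNeg r) 1) :=
    (eNeg.summable_iff.mpr hsumk)
  calc ∑' r : ℤ, fterm q (-(q:ℂ) ^ k') r 1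
      = ∑' r : ℤ, (fterm q (-(q:ℂ) ^ k) (eNeg r) 1 +
          ((-1:ℂ)) ^ r * ((q:ℂ) ^ 12) ^ (r * (r - 1) / 2)) := by
        exact tsum_congr fun r => fterm_pair hq0 hkk r
    _ = (∑' r : ℤ, fterm q (-(q:ℂ) ^ k) (eNeg r) 1) +
        ∑' r : ℤ, ((-1:ℂ)) ^ r * ((q:ℂ) ^ 12) ^ (r * (r - 1) / 2) :=
        hsume.tsum_add (cterm_summable hq0 hq1)
    _ = ∑' r : ℤ, fterm q (-(q:ℂ) ^ k) r 1 := by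
        rw [eNeg.tsum_eq (fun r => fterm q (-(q:ℂ) ^ k) r 1), cterm_tsum_zero hq0, add_zero]

lemma jtheta_ne_zero {q : ℝ} (hq0 : 0 < q) (hq1 : q < 1) {z : ℂ}
    (hz : ∀ n : ℤ, z ^ 2 ≠ (q : ℂ) ^ n ∧ z ^ 2 ≠ -(q : ℂ) ^ n) :
    jtheta (-z ^ 2) ((q:ℂ) ^ 12) ≠ 0 := by
  have hq : (q:ℂ) ≠ 0 := Complex.ofReal_ne_zero.mpr hq0.ne'
  have hQnorm : ‖(q:ℂ) ^ 12‖ < 1 := by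
    rw [norm_pow, Complex.norm_real, Real.norm_eq_abs, abs_of_pos hq0]
    exact pow_lt_one₀ hq0.le hq1 (by norm_num)
  have hP1 : ∀ i : ℕ, 1 - ((q:ℂ) ^ 12) ^ i * (-z ^ 2) ≠ 0 := by
    intro i h
    apply (hz (-(12 * (i:ℤ)))).2
    have hw : ((q:ℂ) ^ 12) ^ i = (q:ℂ) ^ ((12 * (i:ℤ))) := by
      rw [← pow_mul, ← zpow_natCast (q:ℂ) (12 * i)]
      all_goals push_cast
      all_goals ring
    have hwne : ((q:ℂ) ^ 12) ^ i ≠ 0 := pow_ne_zero _ (pow_ne_zero _ hq)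
    have h' : z ^ 2 * ((q:ℂ) ^ 12) ^ i = -1 := by linear_combination h
    have hmain : z ^ 2 = -1 / ((q:ℂ) ^ 12) ^ i := by
      rw [eq_div_iff hwne]; exact h'
    rw [hmain, hw, neg_div, one_div, ← zpow_neg]
  have hP2 : ∀ i : ℕ, 1 - ((q:ℂ) ^ 12) ^ i * (((q:ℂ) ^ 12) / (-z ^ 2)) ≠ 0 := by
    intro i
    rcases eq_or_ne (z ^ 2) 0 with hz0 | hz0
    · rw [hz0, neg_zero, div_zero, mul_zero, sub_zero]
      exact one_ne_zero
    · intro h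
      apply (hz (12 * ((i:ℤ) + 1))).2
      have hz2 : -z ^ 2 ≠ 0 := neg_ne_zero.mpr hz0
      have h1 : ((q:ℂ) ^ 12) ^ i * ((q:ℂ) ^ 12) / (-z ^ 2) = 1 := by
        rw [mul_div_assoc]
        linear_combination -h
      have h2 : ((q:ℂ) ^ 12) ^ i * ((q:ℂ) ^ 12) = -z ^ 2 :=
        (div_eq_one_iff_eq hz2).mp h1
      have hmain : z ^ 2 = -(((q:ℂ) ^ 12) ^ i * ((q:ℂ) ^ 12)) := by
        linear_combination h2
      rw [hmain]
      congr 1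
      rw [← pow_succ, ← pow_mul, ← zpow_natCast (q:ℂ) (12 * (i + 1))]
      all_goals push_cast
      all_goals ring
  have hP3 : ∀ i : ℕ, 1 - ((q:ℂ) ^ 12) ^ i * ((q:ℂ) ^ 12) ≠ 0 := by
    intro i h
    have : ((q:ℂ) ^ 12) ^ i * ((q:ℂ) ^ 12) = (((q ^ 12) ^ i * q ^ 12 : ℝ) : ℂ) := by
      rw [Complex.ofReal_mul, Complex.ofReal_pow, Complex.ofReal_pow]
    rw [this] at h
    have h1 : ((1 - (q ^ 12) ^ i * q ^ 12 : ℝ) : ℂ) = 0 := by push_cast at h ⊢; linear_combination h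
    have h2 : (1 - (q ^ 12) ^ i * q ^ 12 : ℝ) ≠ 0 := by
      have ha : (q:ℝ) ^ 12 < 1 := pow_lt_one₀ hq0.le hq1 (by norm_num)
      have hb : ((q:ℝ) ^ 12) ^ i ≤ 1 := pow_le_one₀ (by positivity) ha.le
      nlinarith [pow_pos (show (0:ℝ) < q ^ 12 by positivity) i]
    exact h2 (Complex.ofReal_eq_zero.mp h1)
  rw [jtheta]
  exact mul_ne_zero (mul_ne_zero (qPochInf_ne_zero hQnorm hP1) (qPochInf_ne_zero hQnorm hP2))
    (qPochInf_ne_zero hQnorm hP3)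

lemma main_tendsto {q : ℝ} (hq0 : 0 < q) (hq1 : q < 1) {k k' : ℕ}
    (hkk : (k:ℤ) + (k':ℤ) = 12) :
    Filter.Tendsto
        (fun z : ℂ =>
          jtheta (-z ^ 2) ((q : ℂ) ^ 12) *
            (appell (-(q : ℂ) ^ k) (-z ^ 2) ((q : ℂ) ^ 12) -
              appell (-(q : ℂ) ^ k') (-z ^ 2) ((q : ℂ) ^ 12)))
        (nhdsWithin Complex.I
          {z : ℂ | ∀ n : ℤ, z ^ 2 ≠ (q : ℂ) ^ n ∧ z ^ 2 ≠ -(q : ℂ) ^ n})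
        (nhds 0) := by
  set F : ℕ → ℂ → ℂ := fun m u => ∑' r : ℤ, fterm q (-(q:ℂ) ^ m) r u with hF
  have hcont : ∀ m : ℕ, ContinuousAt (F m) 1 := by
    intro m
    have hco : ContinuousOn (F m) (Metric.ball (1:ℂ) 2⁻¹) := by
      apply continuousOn_tsum (fun r => fterm_continuousOn hq0 m r) (mj_summable hq0 hq1)
      intro r u hu
      exact fterm_bound hq0 hq1 m r hu
    exact hco.continuousAt (Metric.ball_mem_nhds 1 (by norm_num))
  have hmap : Filter.Tendsto (fun z : ℂ => -z ^ 2)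
      (nhdsWithin Complex.I
        {z : ℂ | ∀ n : ℤ, z ^ 2 ≠ (q : ℂ) ^ n ∧ z ^ 2 ≠ -(q : ℂ) ^ n}) (nhds 1) := by
    have h1 : Filter.Tendsto (fun z : ℂ => -z ^ 2) (nhds Complex.I) (nhds (-Complex.I ^ 2)) :=
      ((continuous_pow 2).neg).tendsto Complex.I
    rw [Complex.I_sq, neg_neg] at h1
    exact h1.mono_left nhdsWithin_le_nhds
  have hG : Filter.Tendsto (fun z : ℂ => F k (-z ^ 2) - F k' (-z ^ 2))
      (nhdsWithin Complex.I
        {z : ℂ | ∀ n : ℤ, z ^ 2 ≠ (q : ℂ) ^ n ∧ z ^ 2 ≠ -(q : ℂ) ^ n})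
      (nhds (F k 1 - F k' 1)) :=
    (((hcont k).sub (hcont k')).tendsto).comp hmap
  have hval : F k 1 - F k' 1 = 0 := by
    rw [hF]
    simp only
    rw [fterm_tsum_eq hq0 hq1 hkk, sub_self]
  rw [hval] at hG
  apply hG.congr'
  apply Filter.eventually_of_mem self_mem_nhdsWithin
  intro z hz
  have hj := jtheta_ne_zero hq0 hq1 hz
  show F k (-z ^ 2) - F k' (-z ^ 2) = jtheta (-z ^ 2) ((q:ℂ) ^ 12) *
      (appell (-(q:ℂ) ^ k) (-z ^ 2) ((q:ℂ) ^ 12) - appell (-(q:ℂ) ^ k') (-z ^ 2) ((q:ℂ) ^ 12))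
  have ha : ∀ m : ℕ, appell (-(q : ℂ) ^ m) (-z ^ 2) ((q : ℂ) ^ 12)
      = (1 / jtheta (-z ^ 2) ((q:ℂ) ^ 12)) * F m (-z ^ 2) := fun m => rfl
  rw [ha, ha]
  field_simp

end AppellLimitAux


/-- Vanishing limits of Appell-function combinations as `z → i`. -/
theorem appell_limit_at_I (q : ℝ) (hq0 : 0 < q) (hq1 : q < 1) :
    Filter.Tendsto
        (fun z : ℂ =>
          jtheta (-z ^ 2) ((q : ℂ) ^ 12) *
            (appell (-(q : ℂ) ^ 8) (-z ^ 2) ((q : ℂ) ^ 12) -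
              appell (-(q : ℂ) ^ 4) (-z ^ 2) ((q : ℂ) ^ 12)))
        (nhdsWithin Complex.I
          {z : ℂ | ∀ n : ℤ, z ^ 2 ≠ (q : ℂ) ^ n ∧ z ^ 2 ≠ -(q : ℂ) ^ n})
        (nhds 0) ∧
    Filter.Tendsto
        (fun z : ℂ =>
          jtheta (-z ^ 2) ((q : ℂ) ^ 12) *
            (appell (-(q : ℂ) ^ 10) (-z ^ 2) ((q : ℂ) ^ 12) -
              appell (-(q : ℂ) ^ 2) (-z ^ 2) ((q : ℂ) ^ 12)))
        (nhdsWithin Complex.I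
          {z : ℂ | ∀ n : ℤ, z ^ 2 ≠ (q : ℂ) ^ n ∧ z ^ 2 ≠ -(q : ℂ) ^ n})
        (nhds 0) := by
  exact ⟨AppellLimitAux.main_tendsto hq0 hq1 (by norm_num),
    AppellLimitAux.main_tendsto hq0 hq1 (by norm_num)⟩
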